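/- arXiv:2108.12075 — 2 statements merged into one kernel-verified Lean document; each statement's English description precedes it below -/
import Mathlib

section
/- A deterministic program P : Hty × Lty → Lty' satisfies noninterference (i.e., P(h₁,l) = P(h₂,l) for all h₁,h₂,l) if and only if for every finitely supported joint input distribution (H,L), the leakage H(P(H,L) | L) = 0. -/
open Finset Real

/-- Probability mass of the event `X = x` under distribution `p` on a finite sample space. -/
noncomputable def mass {Ω α : Type*} [Fintype Ω] [DecidableEq α]
    (p : Ω → ℝ) (X : Ω → α) (x : α) : ℝ :=
  ∑ ω ∈ Finset.univ.filter (fun ω => X ω = x), p ω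

/-- Shannon entropy of a finitely supported random variable (convention `0 * log 0 = 0`
since `Real.log 0 = 0`). -/
noncomputable def entropy {Ω α : Type*} [Fintype Ω] [Fintype α] [DecidableEq α]
    (p : Ω → ℝ) (X : Ω → α) : ℝ :=
  -∑ x, mass p X x * Real.log (mass p X x)

/-- Conditional Shannon entropy `H(X | L) = ∑ l p(l) H(X | L = l)`, written via the joint mass. -/
noncomputable def condEntropy {Ω α β : Type*} [Fintype Ω] [Fintype α] [Fintype β]
    [DecidableEq α] [DecidableEq β] (p : Ω → ℝ) (X : Ω → α) (L : Ω → β) : ℝ :=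
  -∑ l, ∑ x, mass p (fun ω => (X ω, L ω)) (x, l) *
      Real.log (mass p (fun ω => (X ω, L ω)) (x, l) / mass p L l)

lemma mass_eq_sum_ite {Ω α : Type*} [Fintype Ω] [DecidableEq α]
    (p : Ω → ℝ) (X : Ω → α) (x : α) :
    mass p X x = ∑ ω, if X ω = x then p ω else 0 := by
  rw [mass, Finset.sum_filter]


lemma mass_twoPoint {Ω α : Type*} [Fintype Ω] [DecidableEq Ω] [DecidableEq α]
    (a b : Ω) (X : Ω → α) (x : α) :
    mass (fun ω => (if ω = a then (1:ℝ)/2 else 0) + (if ω = b then (1:ℝ)/2 else 0)) X x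
      = (if X a = x then (1:ℝ)/2 else 0) + (if X b = x then (1:ℝ)/2 else 0) := by
  rw [mass_eq_sum_ite]
  have key : ∀ ω, (if X ω = x then ((if ω = a then (1:ℝ)/2 else 0) + (if ω = b then (1:ℝ)/2 else 0)) else 0)
      = (if ω = a then (if X a = x then (1:ℝ)/2 else 0) else 0)
        + (if ω = b then (if X b = x then (1:ℝ)/2 else 0) else 0) := by
    intro ω
    by_cases h1 : ω = a <;> by_cases h2 : ω = b <;> simp [h1, h2] <;> split_ifs <;> simp_all
  rw [Finset.sum_congr rfl (fun ω _ => key ω), Finset.sum_add_distrib,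
    Finset.sum_ite_eq', Finset.sum_ite_eq']
  simp

/-- Noninterference iff zero leakage for every finitely supported joint input distribution. -/
theorem noninterference_iff_zero_leakage {Hty Lty Lty' : Type*}
    [Fintype Hty] [Fintype Lty] [Fintype Lty']
    [Nonempty Hty] [Nonempty Lty]
    [DecidableEq Hty] [DecidableEq Lty] [DecidableEq Lty']
    (P : Hty × Lty → Lty') :
    (∀ h₁ h₂ : Hty, ∀ l : Lty, P (h₁, l) = P (h₂, l)) ↔
      (∀ q : Hty × Lty → ℝ, (∀ x, 0 ≤ q x) → ∑ x, q x = 1 →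
        condEntropy q (fun x => P x) Prod.snd = 0) := by
  constructor
  · intro NI q hq hsum
    set f : Lty → Lty' := fun l => P (Classical.arbitrary Hty, l) with hf
    have hP : ∀ ω : Hty × Lty, P ω = f ω.2 := by
      intro ω; exact NI ω.1 (Classical.arbitrary Hty) ω.2
    have key : ∀ (l' : Lty) (x : Lty'),
        mass q (fun ω => (P ω, Prod.snd ω)) (x, l')
          = if x = f l' then mass q Prod.snd l' else 0 := by
      intro l' x
      rw [mass_eq_sum_ite, mass_eq_sum_ite]
      by_cases hx : x = f l'
      · simp only [hx, if_true]
        apply Finset.sum_congr rfl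
        intro ω _
        by_cases h : ω.2 = l'
        · simp [Prod.ext_iff, hP ω, h]
        · simp [Prod.ext_iff, h]
      · simp only [hx, if_false]
        apply Finset.sum_eq_zero
        intro ω _
        have hcon : ¬ ((P ω, ω.2) = (x, l')) := by
          intro h
          rw [Prod.mk.injEq] at h
          exact hx (by rw [← h.1, hP ω, h.2])
        simp [hcon]
    rw [condEntropy]
    rw [neg_eq_zero]
    apply Finset.sum_eq_zero
    intro l' _
    apply Finset.sum_eq_zero
    intro x _
    rw [key l' x]
    by_cases hx : x = f l'
    · simp only [hx, if_true]
      by_cases hm : mass q Prod.snd l' = 0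
      · simp [hm]
      · rw [div_self hm, Real.log_one, mul_zero]
    · simp [hx]
  · intro H h₁ h₂ l
    by_contra hne
    have hab : (h₁, l) ≠ (h₂, l) := by
      intro e; exact hne (congrArg P e)
    set a : Hty × Lty := (h₁, l) with ha
    set b : Hty × Lty := (h₂, l) with hb
    set q : Hty × Lty → ℝ := fun ω => (if ω = a then (1:ℝ)/2 else 0) + (if ω = b then (1:ℝ)/2 else 0) with hqdef
    have hq : ∀ x, 0 ≤ q x := by
      intro x; dsimp [q]; positivity
    have hsum : ∑ x, q x = 1 := by
      simp [q, Finset.sum_add_distrib, Finset.sum_ite_eq']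
      norm_num
    have hzero := H q hq hsum
    have hPab : P a ≠ P b := hne
    have msnd : ∀ l' : Lty, mass q Prod.snd l' = if l = l' then 1 else 0 := by
      intro l'
      rw [hqdef, mass_twoPoint a b Prod.snd l']
      simp only [ha, hb]
      split_ifs <;> simp_all <;> norm_num
    have mjoint : ∀ (x : Lty') (l' : Lty),
        mass q (fun ω => (P ω, Prod.snd ω)) (x, l')
          = (if (P a, l) = (x, l') then (1:ℝ)/2 else 0) + (if (P b, l) = (x, l') then (1:ℝ)/2 else 0) := by
      intro x l'
      rw [hqdef]; exact mass_twoPoint _ _ _ _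
    rw [condEntropy] at hzero
    have inner : ∀ l' : Lty, (∑ x, mass q (fun ω => (P ω, Prod.snd ω)) (x, l') *
        Real.log (mass q (fun ω => (P ω, Prod.snd ω)) (x, l') / mass q Prod.snd l'))
        = if l = l' then -Real.log 2 else 0 := by
      intro l'
      by_cases hl : l = l'
      · subst hl
        simp only [if_true]
        have : ∀ x : Lty', mass q (fun ω => (P ω, Prod.snd ω)) (x, l) *
            Real.log (mass q (fun ω => (P ω, Prod.snd ω)) (x, l) / mass q Prod.snd l)
            = (if x = P a then (1/2) * Real.log (1/2) else 0)
              + (if x = P b then (1/2) * Real.log (1/2) else 0) := by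
          intro x
          rw [mjoint, msnd]
          simp only [if_pos rfl, Prod.mk.injEq, and_true]
          by_cases h1 : x = P a <;> by_cases h2 : x = P b <;>
            simp [h1, h2, eq_comm, hPab] <;> simp_all
        rw [Finset.sum_congr rfl (fun x _ => this x), Finset.sum_add_distrib,
          Finset.sum_ite_eq', Finset.sum_ite_eq']
        simp only [Finset.mem_univ, if_true]
        have hl2 : Real.log (1/2) = -Real.log 2 := by
          rw [one_div, Real.log_inv]
        rw [hl2]; ring
      · simp only [if_neg hl]
        apply Finset.sum_eq_zero
        intro x _
        rw [mjoint]
        have h1 : (P a, l) ≠ (x, l') := by simp [Prod.ext_iff]; intro _; exact hl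
        have h2 : (P b, l) ≠ (x, l') := by simp [Prod.ext_iff]; intro _; exact hl
        simp [h1, h2]
    rw [Finset.sum_congr rfl (fun l' _ => inner l'), Finset.sum_ite_eq] at hzero
    simp at hzero
    have : (0:ℝ) < Real.log 2 := Real.log_pos (by norm_num)
    linarith
end

section
/- If H(P(H,L) | L) = 0 for the uniform distribution on a finite type Hty × Lty, then P satisfies noninterference: P(h₁,l) = P(h₂,l) for all h₁, h₂ ∈ Hty, l ∈ Lty. -/
open Finset Real

lemma mass_nonneg' {Ω α : Type*} [Fintype Ω] [DecidableEq α]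
    (p : Ω → ℝ) (hp : ∀ ω, 0 ≤ p ω) (X : Ω → α) (x : α) : 0 ≤ mass p X x :=
  Finset.sum_nonneg fun ω _ => hp ω

lemma joint_le_marginal {Ω α β : Type*} [Fintype Ω] [DecidableEq α] [DecidableEq β]
    (p : Ω → ℝ) (hp : ∀ ω, 0 ≤ p ω) (X : Ω → α) (L : Ω → β) (x : α) (l : β) :
    mass p (fun ω => (X ω, L ω)) (x, l) ≤ mass p L l := by
  apply Finset.sum_le_sum_of_subset_of_nonneg
  · intro ω hω
    simp only [Finset.mem_filter, Prod.mk.injEq] at *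
    exact ⟨hω.1, hω.2.2⟩
  · intro ω _ _; exact hp ω

/-- Zero leakage under the uniform distribution on `Hty × Lty` implies noninterference. -/
theorem zero_leakage_uniform_noninterference {Hty Lty Lty' : Type*}
    [Fintype Hty] [Fintype Lty] [Fintype Lty']
    [Nonempty Hty] [Nonempty Lty]
    [DecidableEq Hty] [DecidableEq Lty] [DecidableEq Lty']
    (P : Hty × Lty → Lty')
    (hzero : condEntropy (fun _ : Hty × Lty => (1 : ℝ) / (Fintype.card (Hty × Lty)))
        (fun x => P x) Prod.snd = 0) :
    ∀ h₁ h₂ : Hty, ∀ l : Lty, P (h₁, l) = P (h₂, l) := by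
  intro h₁ h₂ l
  set p : Hty × Lty → ℝ := fun _ => (1 : ℝ) / (Fintype.card (Hty × Lty)) with hpdef
  have hn : (0 : ℝ) < (Fintype.card (Hty × Lty) : ℝ) := by
    exact_mod_cast Fintype.card_pos
  have hp : ∀ ω, 0 < p ω := fun ω => by simp only [hpdef]; positivity
  have hp' : ∀ ω, 0 ≤ p ω := fun ω => (hp ω).le
  set X : Hty × Lty → Lty' := fun x => P x with hXdef
  set L : Hty × Lty → Lty := Prod.snd with hLdef
  -- each term of the conditional entropy is nonpositive (before negation)
  have key : ∀ l' x, mass p (fun ω => (X ω, L ω)) (x, l') *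
      Real.log (mass p (fun ω => (X ω, L ω)) (x, l') / mass p L l') ≤ 0 := by
    intro l' x
    set q := mass p (fun ω => (X ω, L ω)) (x, l') with hq
    have hq0 : 0 ≤ q := mass_nonneg' p hp' _ _
    have hle : q ≤ mass p L l' := joint_le_marginal p hp' X L x l'
    rcases eq_or_lt_of_le hq0 with h0 | h0
    · rw [← h0]; simp
    · have hm : 0 < mass p L l' := lt_of_lt_of_le h0 hle
      have : Real.log (q / mass p L l') ≤ 0 :=
        Real.log_nonpos (by positivity) ((div_le_one hm).2 hle)
      exact mul_nonpos_of_nonneg_of_nonpos hq0 this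
  -- sum is zero, terms nonpositive, hence all zero
  have hsum : ∑ l', ∑ x, mass p (fun ω => (X ω, L ω)) (x, l') *
      Real.log (mass p (fun ω => (X ω, L ω)) (x, l') / mass p L l') = 0 := by
    have := hzero
    unfold condEntropy at this
    linarith [this]
  have hterm : ∀ l' x, mass p (fun ω => (X ω, L ω)) (x, l') *
      Real.log (mass p (fun ω => (X ω, L ω)) (x, l') / mass p L l') = 0 := by
    have houter : ∀ l' ∈ Finset.univ, (∑ x, mass p (fun ω => (X ω, L ω)) (x, l') *
        Real.log (mass p (fun ω => (X ω, L ω)) (x, l') / mass p L l')) = 0 := by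
      rw [← Finset.sum_eq_zero_iff_of_nonpos]
      · exact hsum
      · intro l' _
        exact Finset.sum_nonpos fun x _ => key l' x
    intro l' x
    have := Finset.sum_eq_zero_iff_of_nonpos (s := (Finset.univ : Finset Lty'))
      (f := fun x => mass p (fun ω => (X ω, L ω)) (x, l') *
        Real.log (mass p (fun ω => (X ω, L ω)) (x, l') / mass p L l'))
      (fun x _ => key l' x)
    exact this.1 (houter l' (Finset.mem_univ l')) x (Finset.mem_univ x)
  -- specialize to x = P (h₁, l)
  set x := P (h₁, l) with hx
  set q := mass p (fun ω => (X ω, L ω)) (x, l) with hqdef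
  have hqpos : 0 < q := by
    rw [hqdef]
    unfold mass
    apply Finset.sum_pos'
    · intro ω _; exact (hp ω).le
    · refine ⟨(h₁, l), ?_, hp (h₁, l)⟩
      simp [hXdef, hLdef, hx]
  have hmpos : 0 < mass p L l :=
    lt_of_lt_of_le hqpos (joint_le_marginal p hp' X L x l)
  have heq : q = mass p L l := by
    have h0 := hterm l x
    rw [← hqdef] at h0
    rcases mul_eq_zero.1 h0 with h | h
    · exact absurd h hqpos.ne'
    · rcases Real.log_eq_zero.1 h with h | h | h
      · exact absurd h (by positivity)
      · field_simp at h; linarith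
      · nlinarith [div_pos hqpos hmpos]
  -- turn mass equality into set equality
  have hsub : (Finset.univ.filter (fun ω : Hty × Lty => (X ω, L ω) = (x, l))) ⊆
      (Finset.univ.filter (fun ω : Hty × Lty => L ω = l)) := by
    intro ω hω
    simp only [Finset.mem_filter, Prod.mk.injEq] at *
    exact ⟨hω.1, hω.2.2⟩
  have hmem : (h₂, l) ∈ Finset.univ.filter (fun ω : Hty × Lty => (X ω, L ω) = (x, l)) := by
    by_contra hmem
    have hmem2 : (h₂, l) ∈ (Finset.univ.filter (fun ω : Hty × Lty => L ω = l)) \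
        (Finset.univ.filter (fun ω : Hty × Lty => (X ω, L ω) = (x, l))) := by
      simp only [Finset.mem_sdiff, Finset.mem_filter, Finset.mem_univ, true_and]
      exact ⟨rfl, fun h => hmem (Finset.mem_filter.2 ⟨Finset.mem_univ _, h⟩)⟩
    have hdiff : 0 < ∑ ω ∈ (Finset.univ.filter (fun ω : Hty × Lty => L ω = l)) \
        (Finset.univ.filter (fun ω : Hty × Lty => (X ω, L ω) = (x, l))), p ω :=
      Finset.sum_pos' (fun ω _ => (hp ω).le) ⟨(h₂, l), hmem2, hp (h₂, l)⟩
    have hsd := Finset.sum_sdiff (f := p) hsub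
    have : q + 0 < mass p L l := by
      rw [hqdef]
      unfold mass
      calc (∑ ω ∈ Finset.univ.filter (fun ω : Hty × Lty => (X ω, L ω) = (x, l)), p ω) + 0
          < (∑ ω ∈ (Finset.univ.filter (fun ω : Hty × Lty => L ω = l)) \
              (Finset.univ.filter (fun ω : Hty × Lty => (X ω, L ω) = (x, l))), p ω) +
            (∑ ω ∈ Finset.univ.filter (fun ω : Hty × Lty => (X ω, L ω) = (x, l)), p ω) := by
            linarith
        _ = ∑ ω ∈ Finset.univ.filter (fun ω : Hty × Lty => L ω = l), p ω := hsd
    rw [heq] at this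
    linarith
  simp only [Finset.mem_filter, Prod.mk.injEq, hXdef, hLdef] at hmem
  exact (hmem.2.1).symm
end
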